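/- (Appendix B, closure statement.) Let w : ℝⁿ → (0,∞) satisfy w(x) ≤ B·exp(−b|x|²) for all x ∈ ℝⁿ, with constants B, b > 0. Then for every k ∈ ℝⁿ the function x ↦ exp(i k·x) lies in the closure of the algebra of polynomial functions on ℝⁿ with respect to the seminorm ‖f‖_w = sup_{x∈ℝⁿ} |f(x)|·w(x); explicitly, sup_{x∈ℝⁿ} |exp(i k·x) − Σ_{n=0}^{N} (i k·x)^n/n!|·w(x) → 0 as N → ∞. -/

import Mathlib

open scoped RealInnerProductSpace

lemma exp_taylor_remainder_bound (z : ℂ) (M : ℕ) :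
    ‖Complex.exp z - ∑ m ∈ Finset.range M, z ^ m / (m.factorial : ℂ)‖ ≤
      ‖z‖ ^ M / (M.factorial : ℝ) * Real.exp ‖z‖ := by
  have hsn : Summable (fun m : ℕ => ‖z‖ ^ m / (m.factorial : ℝ)) :=
    Real.summable_pow_div_factorial ‖z‖
  have hs : Summable (fun m : ℕ => z ^ m / (m.factorial : ℂ)) := by
    apply Summable.of_norm
    convert hsn using 2 with m
    simp [norm_pow]
  have hexp : Complex.exp z = ∑' m : ℕ, z ^ m / (m.factorial : ℂ) := by
    rw [Complex.exp_eq_exp_ℂ, NormedSpace.exp_eq_tsum_div]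
  have hsplit := Summable.sum_add_tsum_nat_add M hs
  have hdiff : Complex.exp z - ∑ m ∈ Finset.range M, z ^ m / (m.factorial : ℂ)
      = ∑' i : ℕ, z ^ (i + M) / ((i + M).factorial : ℂ) := by
    rw [hexp, ← hsplit]; ring
  rw [hdiff]
  have hgsum : HasSum (fun i : ℕ => ‖z‖ ^ M / (M.factorial : ℝ) * (‖z‖ ^ i / (i.factorial : ℝ)))
      (‖z‖ ^ M / (M.factorial : ℝ) * Real.exp ‖z‖) := by
    have h := NormedSpace.expSeries_div_hasSum_exp ‖z‖
    rw [← Real.exp_eq_exp_ℝ] at h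
    exact h.mul_left _
  refine tsum_of_norm_bounded hgsum (fun i => ?_)
  have h1 : ‖z ^ (i + M) / ((i + M).factorial : ℂ)‖
      = ‖z‖ ^ (i + M) / ((i + M).factorial : ℝ) := by
    simp [norm_pow]
  rw [h1]
  have hfac : ((i.factorial * M.factorial : ℕ) : ℝ) ≤ ((i + M).factorial : ℝ) := by
    exact_mod_cast Nat.le_of_dvd (Nat.factorial_pos _)
      (Nat.factorial_mul_factorial_dvd_factorial_add i M)
  calc ‖z‖ ^ (i + M) / ((i + M).factorial : ℝ)
      ≤ ‖z‖ ^ (i + M) / ((i.factorial * M.factorial : ℕ) : ℝ) := by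
        apply div_le_div_of_nonneg_left (by positivity) (by positivity) hfac
    _ = ‖z‖ ^ M / (M.factorial : ℝ) * (‖z‖ ^ i / (i.factorial : ℝ)) := by
        push_cast
        rw [pow_add]
        ring

/-- Appendix B, closure statement: if `w(x) ≤ B e^{−b|x|²}` with
`B, b > 0`, then for every `k ∈ ℝⁿ` the plane wave `x ↦ e^{i k·x}` lies in the
closure of the polynomials in the `w`-weighted supremum seminorm: the weighted
sup distance to the Taylor polynomials tends to `0` as `N → ∞`. -/
theorem plane_wave_in_closure_of_polynomials {n : ℕ}
    (w : EuclideanSpace ℝ (Fin n) → ℝ)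
    (B b : ℝ) (hB : 0 < B) (hb : 0 < b)
    (hw_pos : ∀ x, 0 < w x)
    (hw : ∀ x, w x ≤ B * Real.exp (-b * ‖x‖ ^ 2))
    (k : EuclideanSpace ℝ (Fin n)) :
    Filter.Tendsto (fun N : ℕ => ⨆ x : EuclideanSpace ℝ (Fin n),
        ‖Complex.exp (Complex.I * ((⟪k, x⟫ : ℝ) : ℂ)) -
            ∑ m ∈ Finset.range (N + 1),
              (Complex.I * ((⟪k, x⟫ : ℝ) : ℂ)) ^ m / (m.factorial : ℂ)‖ * w x)
      Filter.atTop (nhds 0) := by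
  set c : ℝ := ‖k‖ with hc
  have hc0 : 0 ≤ c := norm_nonneg k
  set q : ℝ := c / (c + 1) with hqdef
  have hq0 : 0 ≤ q := by positivity
  have hq1 : q < 1 := (div_lt_one (by positivity)).mpr (lt_add_one c)
  set K : ℝ := B * Real.exp ((2 * c + 1) ^ 2 / (4 * b)) with hK
  have hpoint : ∀ (N : ℕ) (x : EuclideanSpace ℝ (Fin n)),
      ‖Complex.exp (Complex.I * ((⟪k, x⟫ : ℝ) : ℂ)) -
          ∑ m ∈ Finset.range (N + 1),
            (Complex.I * ((⟪k, x⟫ : ℝ) : ℂ)) ^ m / (m.factorial : ℂ)‖ * w x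
        ≤ K * q ^ (N + 1) := by
    intro N x
    set z : ℂ := Complex.I * ((⟪k, x⟫ : ℝ) : ℂ) with hz
    set t : ℝ := ‖x‖ with ht
    have ht0 : 0 ≤ t := norm_nonneg x
    have hznorm : ‖z‖ = |⟪k, x⟫| := by
      rw [hz, norm_mul, Complex.norm_I, one_mul, Complex.norm_real, Real.norm_eq_abs]
    have hzle : ‖z‖ ≤ c * t := by
      rw [hznorm]; exact abs_real_inner_le_norm k x
    calc ‖Complex.exp z - ∑ m ∈ Finset.range (N + 1), z ^ m / (m.factorial : ℂ)‖ * w x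
        ≤ (‖z‖ ^ (N + 1) / ((N + 1).factorial : ℝ) * Real.exp ‖z‖) * w x :=
          mul_le_mul_of_nonneg_right (exp_taylor_remainder_bound z (N + 1)) (hw_pos x).le
      _ ≤ ((c * t) ^ (N + 1) / ((N + 1).factorial : ℝ) * Real.exp (c * t)) *
            (B * Real.exp (-b * t ^ 2)) := by
          have h2 : ‖z‖ ^ (N + 1) / ((N + 1).factorial : ℝ) * Real.exp ‖z‖ ≤
              (c * t) ^ (N + 1) / ((N + 1).factorial : ℝ) * Real.exp (c * t) := by
            gcongr
          exact mul_le_mul h2 (hw x) (hw_pos x).le (by positivity)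
      _ = B * ((c * t) ^ (N + 1) / ((N + 1).factorial : ℝ)) *
            Real.exp (c * t + -b * t ^ 2) := by
          simp only [Real.exp_add]; ring
      _ ≤ B * (q ^ (N + 1) * Real.exp ((c + 1) * t)) * Real.exp (c * t + -b * t ^ 2) := by
          have hsplit : (c * t) ^ (N + 1) = q ^ (N + 1) * ((c + 1) * t) ^ (N + 1) := by
            rw [← mul_pow]
            congr 1
            rw [hqdef]
            have hc1 : c + 1 ≠ 0 := by positivity
            field_simp
          have hpe : ((c + 1) * t) ^ (N + 1) / ((N + 1).factorial : ℝ)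
              ≤ Real.exp ((c + 1) * t) :=
            Real.pow_div_factorial_le_exp (x := (c + 1) * t) (by positivity) (N + 1)
          have : (c * t) ^ (N + 1) / ((N + 1).factorial : ℝ)
              ≤ q ^ (N + 1) * Real.exp ((c + 1) * t) := by
            rw [hsplit, mul_div_assoc]
            exact mul_le_mul_of_nonneg_left hpe (by positivity)
          gcongr
      _ = B * q ^ (N + 1) * Real.exp ((c + 1) * t + (c * t + -b * t ^ 2)) := by
          simp only [Real.exp_add]; ring
      _ ≤ B * q ^ (N + 1) * Real.exp ((2 * c + 1) ^ 2 / (4 * b)) := by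
          gcongr
          rw [le_div_iff₀ (by positivity : (0:ℝ) < 4 * b)]
          nlinarith [sq_nonneg ((2 * c + 1) - 2 * b * t)]
      _ = K * q ^ (N + 1) := by rw [hK]; ring
  have hlim : Filter.Tendsto (fun N : ℕ => K * q ^ (N + 1)) Filter.atTop (nhds 0) := by
    have h1 : Filter.Tendsto (fun N : ℕ => q ^ (N + 1)) Filter.atTop (nhds 0) :=
      (tendsto_pow_atTop_nhds_zero_of_lt_one hq0 hq1).comp (Filter.tendsto_add_atTop_nat 1)
    simpa using h1.const_mul K
  refine squeeze_zero (fun N => ?_) (fun N => ciSup_le (hpoint N)) hlim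
  exact Real.iSup_nonneg fun x => mul_nonneg (norm_nonneg _) (hw_pos x).le
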